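/- Let R = k[x^d, x^e y^ℓ, x^f y^m, y^n] as in the four-generator setup and let H be the subgroup of (ℤ/dℤ)⊕(ℤ/nℤ) generated by (e,ℓ),(f,m). Then dim_k R/(x^d,y^n) ≤ |H|(|H|+1)/2 ≤ dn(dn+1)/2. -/

import Mathlib

open MvPolynomial Finset AddSubgroup

set_option synthInstance.maxHeartbeats 1000000
set_option maxHeartbeats 2000000

def goodPair {A : Type*} [AddCommGroup A] (g₁ g₂ : A) (β γ : ℕ) : Prop :=
  ∀ a b : ℕ, a ≤ β → b ≤ γ → ¬(a = 0 ∧ b = 0) → a • g₁ + b • g₂ ≠ 0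

open Classical in
noncomputable def goodFinset {A : Type*} [AddCommGroup A] (g₁ g₂ : A) : Finset (ℕ × ℕ) :=
  (Finset.range (addOrderOf g₁) ×ˢ Finset.range (addOrderOf g₂)).filter
    (fun pr => goodPair g₁ g₂ pr.1 pr.2)

/-- structure of `{a : ℤ | a • g ∈ zmultiples h}`. -/
lemma aux_p {A : Type*} [AddCommGroup A] [Fintype A] (g h : A) :
    ∃ p : ℕ, 0 < p ∧
      p * Nat.card (zmultiples g ⊓ zmultiples h : AddSubgroup A) = addOrderOf g ∧
      ∀ a : ℤ, a • g ∈ zmultiples h ↔ (p : ℤ) ∣ a := by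
  set K : AddSubgroup ℤ := (zmultiples h).comap (zmultiplesHom A g) with hK
  obtain ⟨p', hp'⟩ := Int.subgroup_cyclic K
  have hmem : ∀ a : ℤ, a • g ∈ zmultiples h ↔ p' ∣ a := by
    intro a
    have h1 : a • g ∈ zmultiples h ↔ a ∈ K := Iff.rfl
    rw [h1, hp', AddSubgroup.mem_closure_singleton]
    constructor
    · rintro ⟨n, rfl⟩; exact ⟨n, by rw [zsmul_eq_mul, Int.cast_id]; ring⟩
    · rintro ⟨n, rfl⟩; exact ⟨n, by rw [zsmul_eq_mul, Int.cast_id]; ring⟩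
  have ho : 0 < addOrderOf g := addOrderOf_pos g
  have hdvdo : p' ∣ (addOrderOf g : ℤ) := by
    rw [← hmem]
    rw [natCast_zsmul, addOrderOf_nsmul_eq_zero]
    exact zero_mem _
  refine ⟨p'.natAbs, ?_, ?_, ?_⟩
  · rcases Nat.eq_zero_or_pos p'.natAbs with h0 | h0
    · exfalso
      have hz : p' = 0 := Int.natAbs_eq_zero.mp h0
      rw [hz] at hdvdo
      have h2 := zero_dvd_iff.mp hdvdo
      have h3 : addOrderOf g = 0 := by exact_mod_cast h2
      omega
    · exact h0
  · -- p * c = o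
    have hCeq : (zmultiples g ⊓ zmultiples h : AddSubgroup A)
        = zmultiples ((p'.natAbs : ℤ) • g) := by
      ext x
      simp only [AddSubgroup.mem_inf]
      constructor
      · rintro ⟨hx1, hx2⟩
        obtain ⟨a, rfl⟩ := mem_zmultiples_iff.mp hx1
        obtain ⟨t, ht⟩ := (Int.natAbs_dvd.mpr ((hmem a).mp hx2))
        exact mem_zmultiples_iff.mpr ⟨t, by rw [← mul_zsmul, mul_comm, ← ht]⟩
      · intro hx
        obtain ⟨t, rfl⟩ := mem_zmultiples_iff.mp hx
        constructor
        · exact mem_zmultiples_iff.mpr ⟨t * p'.natAbs, by rw [mul_zsmul]⟩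
        · have hpg : (p'.natAbs : ℤ) • g ∈ zmultiples h := (hmem _).mpr (Int.natAbs_dvd.mp dvd_rfl)
          exact AddSubgroup.zsmul_mem _ hpg t
    rw [hCeq, Nat.card_zmultiples, natCast_zsmul, addOrderOf_nsmul g,
      Nat.gcd_eq_right (Int.ofNat_dvd.mp (Int.natAbs_dvd.mpr hdvdo))]
    exact Nat.mul_div_cancel' (Int.ofNat_dvd.mp (Int.natAbs_dvd.mpr hdvdo))
  · intro a; rw [hmem, Int.natAbs_dvd]

/-- `|Z₁| * |Z₂| ≤ |Z₁ ⊔ Z₂| * |Z₁ ⊓ Z₂|` for zmultiples. -/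
lemma aux_card {A : Type*} [AddCommGroup A] [Fintype A] (g h : A) :
    addOrderOf g * addOrderOf h ≤
      Nat.card (AddSubgroup.closure {g, h} : AddSubgroup A) *
        Nat.card (zmultiples g ⊓ zmultiples h : AddSubgroup A) := by
  set Z₁ := zmultiples g
  set Z₂ := zmultiples h
  set χ : (Z₁ × Z₂) →+ A := AddMonoidHom.coprod Z₁.subtype Z₂.subtype with hχ
  have hcard1 : Nat.card (Z₁ × Z₂) = addOrderOf g * addOrderOf h := by
    rw [Nat.card_prod, Nat.card_zmultiples, Nat.card_zmultiples]
  have hrange : ∀ x : A, x ∈ χ.range ↔ x ∈ Z₁ ⊔ Z₂ := by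
    intro x
    rw [AddMonoidHom.mem_range, AddSubgroup.mem_sup]
    constructor
    · rintro ⟨⟨y, z⟩, rfl⟩
      exact ⟨y, y.2, z, z.2, rfl⟩
    · rintro ⟨y, hy, z, hz, rfl⟩
      exact ⟨(⟨y, hy⟩, ⟨z, hz⟩), rfl⟩
  have hker : Nat.card χ.ker ≤ Nat.card (Z₁ ⊓ Z₂ : AddSubgroup A) := by
    have hinj : Function.Injective (fun x : χ.ker => (⟨x.1.1.1,
        by
          refine AddSubgroup.mem_inf.mpr ⟨x.1.1.2, ?_⟩
          have hx := x.2
          simp only [AddMonoidHom.mem_ker, hχ, AddMonoidHom.coprod_apply,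
            AddSubgroup.coe_subtype] at hx
          have hxx : (x.1.1 : A) = -(x.1.2 : A) := by
            have h2 := hx
            exact eq_neg_of_add_eq_zero_left h2
          rw [hxx]
          exact neg_mem x.1.2.2⟩ : (Z₁ ⊓ Z₂ : AddSubgroup A))) := by
      rintro ⟨⟨⟨y, hy⟩, ⟨z, hz⟩⟩, hx⟩ ⟨⟨⟨y', hy'⟩, ⟨z', hz'⟩⟩, hx'⟩ heq
      simp only [Subtype.mk.injEq] at heq
      simp only [AddMonoidHom.mem_ker, hχ, AddMonoidHom.coprod_apply,
        AddSubgroup.coe_subtype] at hx hx'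
      subst heq
      simp only [Subtype.mk.injEq, Prod.mk.injEq]
      refine ⟨trivial, ?_⟩
      have : z = z' := by
        have e1 : z = -y := eq_neg_of_add_eq_zero_right hx
        have e2 : z' = -y := eq_neg_of_add_eq_zero_right hx'
        rw [e1, e2]
      exact this
    exact Nat.card_le_card_of_injective _ hinj
  have hiso : Nat.card ((Z₁ × Z₂) ⧸ χ.ker) = Nat.card χ.range :=
    Nat.card_congr (QuotientAddGroup.quotientKerEquivRange χ).toEquiv
  have hsupeq : (AddSubgroup.closure {g, h} : AddSubgroup A) = Z₁ ⊔ Z₂ := by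
    rw [Set.insert_eq, AddSubgroup.closure_union, ← zmultiples_eq_closure,
      ← zmultiples_eq_closure]
  have hlag := AddSubgroup.card_eq_card_quotient_mul_card_addSubgroup χ.ker
  have hrangeeq : χ.range = Z₁ ⊔ Z₂ := by ext x; exact hrange x
  rw [hcard1, hiso, hrangeeq] at hlag
  rw [hsupeq]
  rw [hlag]
  exact Nat.mul_le_mul_left _ hker

lemma gauss_aux (c : ℕ) : 2 * (∑ i ∈ Finset.range c, (c - i)) = c * (c + 1) := by
  have h1 : ∑ i ∈ Finset.range c, (c - i) = ∑ i ∈ Finset.range c, (i + 1) := by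
    rw [← Finset.sum_range_reflect (fun i => i + 1) c]
    apply Finset.sum_congr rfl
    intro i hi
    rw [Finset.mem_range] at hi
    omega
  rw [h1, Finset.sum_add_distrib, Finset.sum_const, Finset.card_range, smul_eq_mul, mul_one]
  have h2 := Finset.sum_range_id_mul_two c
  rcases c with _ | c'
  · simp
  · have e1 : (c' + 1) * (c' + 1 - 1) = c' * c' + c' := by
      simp only [Nat.add_sub_cancel]; ring
    have e2 : (c' + 1) * (c' + 1 + 1) = c' * c' + 3 * c' + 2 := by ring
    omega

lemma goodFinset_card_le {A : Type*} [AddCommGroup A] [Fintype A] (g₁ g₂ : A) :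
    (goodFinset g₁ g₂).card ≤
      Nat.card (AddSubgroup.closure {g₁, g₂} : AddSubgroup A) *
        (Nat.card (AddSubgroup.closure {g₁, g₂} : AddSubgroup A) + 1) / 2 := by
  classical
  obtain ⟨p, hp0, hpc, hpdvd⟩ := aux_p g₁ g₂
  obtain ⟨q, hq0, hqc, hqdvd⟩ := aux_p g₂ g₁
  have hcc : Nat.card (zmultiples g₂ ⊓ zmultiples g₁ : AddSubgroup A)
      = Nat.card (zmultiples g₁ ⊓ zmultiples g₂ : AddSubgroup A) := by
    rw [inf_comm]
  rw [hcc] at hqc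
  set c := Nat.card (zmultiples g₁ ⊓ zmultiples g₂ : AddSubgroup A) with hcdef
  set N := Nat.card (AddSubgroup.closure {g₁, g₂} : AddSubgroup A) with hNdef
  have ho₁pos : 0 < addOrderOf g₁ := addOrderOf_pos g₁
  have ho₂pos : 0 < addOrderOf g₂ := addOrderOf_pos g₂
  have hc0 : 0 < c := by
    rcases Nat.eq_zero_or_pos c with hz | h
    · rw [hz, mul_zero] at hpc; omega
    · exact h
  have hpqcN : p * q * c ≤ N := by
    have h1 := aux_card g₁ g₂
    rw [← hpc, ← hqc, ← hcdef, ← hNdef] at h1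
    have h2 : (p * q * c) * c = (p * c) * (q * c) := by ring
    refine Nat.le_of_mul_le_mul_right ?_ hc0
    rw [h2]; exact h1
  have hcN : c ≤ N := le_trans (Nat.le_mul_of_pos_left c (Nat.mul_pos hp0 hq0)) hpqcN
  -- existence of the pairing
  have hex : ∀ j, 1 ≤ j → j < c → ∃ s, 1 ≤ s ∧ s < c ∧ (j*p) • g₁ + (s*q) • g₂ = 0 := by
    intro j hj1 hjc
    have h1 : ((j*p : ℕ) : ℤ) • g₁ ∈ zmultiples g₂ := by
      refine (hpdvd _).mpr ⟨j, by push_cast; ring⟩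
    obtain ⟨B, hB⟩ := mem_zmultiples_iff.mp h1
    have ho₂posZ : (0:ℤ) < (addOrderOf g₂ : ℤ) := by exact_mod_cast ho₂pos
    set B0 : ℤ := (-B) % (addOrderOf g₂ : ℤ) with hB0def
    have hB0nn : 0 ≤ B0 := Int.emod_nonneg _ (by omega)
    have hB0lt : B0 < (addOrderOf g₂ : ℤ) := Int.emod_lt_of_pos _ ho₂posZ
    have hzg2 : ((addOrderOf g₂ : ℤ)) • g₂ = 0 := by
      rw [natCast_zsmul]; exact addOrderOf_nsmul_eq_zero g₂
    have hB0g : B0 • g₂ = (-B) • g₂ := by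
      have hdecomp : B0 = -B - (addOrderOf g₂ : ℤ) * ((-B) / (addOrderOf g₂ : ℤ)) := by
        rw [hB0def, Int.emod_def]
      rw [hdecomp, sub_zsmul, mul_comm, mul_zsmul, hzg2, smul_zero]; simp
    have key : ((j*p : ℕ) : ℤ) • g₁ + B0 • g₂ = 0 := by
      rw [hB0g, neg_zsmul, hB, add_neg_cancel]
    set b' := B0.toNat with hb'def
    have hb'cast : (b' : ℤ) = B0 := Int.toNat_of_nonneg hB0nn
    have hb'lt : b' < addOrderOf g₂ := by
      rw [← Nat.cast_lt (α := ℤ), hb'cast]; exact hB0lt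
    have keyn : (j*p) • g₁ + b' • g₂ = 0 := by
      have h3 : ((j*p : ℕ) : ℤ) • g₁ + ((b' : ℕ) : ℤ) • g₂ = 0 := by
        rw [hb'cast]; exact key
      rwa [natCast_zsmul, natCast_zsmul] at h3
    have hqb' : q ∣ b' := by
      have h2 : ((b' : ℕ) : ℤ) • g₂ ∈ zmultiples g₁ := by
        have h4 : ((b' : ℕ) : ℤ) • g₂ = -(((j*p : ℕ) : ℤ) • g₁) := by
          rw [hb'cast, hB0g, neg_zsmul, hB]
        rw [h4]
        exact neg_mem (mem_zmultiples_iff.mpr ⟨((j*p : ℕ) : ℤ), rfl⟩)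
      have h5 := (hqdvd _).mp h2
      exact_mod_cast h5
    have hb'ne : b' ≠ 0 := by
      intro h0
      rw [h0, zero_nsmul, add_zero] at keyn
      have hdvd := addOrderOf_dvd_of_nsmul_eq_zero keyn
      rw [← hpc] at hdvd
      have h6 : c ∣ j := by
        have h7 : p * c ∣ p * j := by rwa [mul_comm j p] at hdvd
        exact (Nat.mul_dvd_mul_iff_left hp0).mp h7
      have := Nat.le_of_dvd (by omega) h6
      omega
    refine ⟨b' / q, ?_, ?_, ?_⟩
    · have : q ≤ b' := Nat.le_of_dvd (by omega) hqb'
      exact (Nat.one_le_div_iff hq0).mpr this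
    · refine Nat.div_lt_of_lt_mul ?_
      rw [hqc]; exact hb'lt
    · rw [Nat.div_mul_cancel hqb']; exact keyn
  -- injectivity of the pairing in `j`
  have hcancel : ∀ j j' s, j ≤ j' → j' < c →
      (j*p) • g₁ + (s*q) • g₂ = 0 → (j'*p) • g₁ + (s*q) • g₂ = 0 → j = j' := by
    intro j j' s hle hj'c h1 h2
    have heq : (j'*p) • g₁ = (j*p) • g₁ := by
      have h3 : (j'*p) • g₁ + (s*q) • g₂ = (j*p) • g₁ + (s*q) • g₂ := by rw [h1, h2]
      exact add_right_cancel h3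
    have h4 : ((j'*p - j*p) + j*p) • g₁ = (j*p) • g₁ := by
      rw [Nat.sub_add_cancel (Nat.mul_le_mul_right p hle)]; exact heq
    rw [add_nsmul] at h4
    have h5 : (j'*p - j*p) • g₁ = 0 := by
      have := add_eq_right.mp h4
      exact this
    have hdvd := addOrderOf_dvd_of_nsmul_eq_zero h5
    rw [← hpc, ← Nat.sub_mul] at hdvd
    have h7 : c ∣ (j' - j) := by
      have h8 : p * c ∣ p * (j' - j) := by rwa [mul_comm (j' - j) p] at hdvd
      exact (Nat.mul_dvd_mul_iff_left hp0).mp h8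
    rcases Nat.eq_zero_or_pos (j' - j) with h|h
    · omega
    · have := Nat.le_of_dvd h h7; omega
  have hinj : ∀ j s j', 1 ≤ j → j < c → 1 ≤ j' → j' < c →
      (j*p) • g₁ + (s*q) • g₂ = 0 → (j'*p) • g₁ + (s*q) • g₂ = 0 → j = j' := by
    intro j s j' _ hjc _ hj'c h1 h2
    rcases le_total j j' with hle | hle
    · exact hcancel j j' s hle hj'c h1 h2
    · exact (hcancel j' j s hle hjc h2 h1).symm
  -- the main injection into the staircase
  have hmain : (goodFinset g₁ g₂).card ≤ p * q * (∑ i ∈ Finset.range c, (c - i)) := by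
    have hmemgf : ∀ pr : ℕ × ℕ, pr ∈ goodFinset g₁ g₂ →
        pr.1 < addOrderOf g₁ ∧ pr.2 < addOrderOf g₂ ∧ goodPair g₁ g₂ pr.1 pr.2 := by
      intro pr hpr
      rw [goodFinset, Finset.mem_filter, Finset.mem_product, Finset.mem_range,
        Finset.mem_range] at hpr
      exact ⟨hpr.1.1, hpr.1.2, hpr.2⟩
    set Big : Finset ((ℕ × ℕ) × (ℕ × ℕ)) :=
      (Finset.range p ×ˢ Finset.range q) ×ˢ
        ((Finset.range c).biUnion (fun i => {i} ×ˢ Finset.range (c - i))) with hBig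
    set F : ℕ × ℕ → (ℕ × ℕ) × (ℕ × ℕ) :=
      fun pr => ((pr.1 % p, pr.2 % q), (pr.1 / p, pr.2 / q)) with hF
    have hmaps : ∀ pr ∈ goodFinset g₁ g₂, F pr ∈ Big := by
      intro pr hpr
      obtain ⟨hb1, hb2, hgood⟩ := hmemgf pr hpr
      obtain ⟨β, γ⟩ := pr
      simp only at hb1 hb2 hgood
      show ((β % p, γ % q), (β / p, γ / q)) ∈ Big
      rw [hBig, Finset.mem_product, Finset.mem_product]
      dsimp only
      refine ⟨⟨Finset.mem_range.mpr (Nat.mod_lt _ hp0), Finset.mem_range.mpr (Nat.mod_lt _ hq0)⟩, ?_⟩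
      have hi : β / p < c := Nat.div_lt_of_lt_mul (by rw [hpc]; exact hb1)
      have hj'lt : γ / q < c := Nat.div_lt_of_lt_mul (by rw [hqc]; exact hb2)
      rw [Finset.mem_biUnion]
      refine ⟨β / p, Finset.mem_range.mpr hi, ?_⟩
      rw [Finset.mem_product, Finset.mem_singleton, Finset.mem_range]
      refine ⟨rfl, ?_⟩
      show γ / q < c - β / p
      rcases Nat.eq_zero_or_pos (β / p) with hi0 | hi0
      · rw [hi0]; omega
      · by_contra hcon
        push_neg at hcon
        set i := β / p with hidef
        set S : Finset ℕ := (Finset.Ico 1 c).filter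
          (fun s => ∃ j, 1 ≤ j ∧ j ≤ i ∧ (j*p) • g₁ + (s*q) • g₂ = 0) with hS
        have hcardS : i ≤ S.card := by
          have h9 : (Finset.Icc 1 i).card ≤ S.card := by
            refine Finset.card_le_card_of_injOn
              (fun j => if hj : 1 ≤ j ∧ j < c then (hex j hj.1 hj.2).choose else 0) ?_ ?_
            · intro j hj
              rw [Finset.mem_coe, Finset.mem_Icc] at hj
              have hjc : 1 ≤ j ∧ j < c := ⟨hj.1, lt_of_le_of_lt hj.2 hi⟩
              show (if hj : 1 ≤ j ∧ j < c then (hex j hj.1 hj.2).choose else 0) ∈ S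
              rw [dif_pos hjc]
              obtain ⟨hs1, hsc, hrel⟩ := (hex j hjc.1 hjc.2).choose_spec
              rw [hS, Finset.mem_filter, Finset.mem_Ico]
              exact ⟨⟨hs1, hsc⟩, j, hj.1, hj.2, hrel⟩
            · intro j hj j' hj' heq
              simp only [Finset.coe_Icc, Set.mem_Icc] at hj hj'
              have hjc : 1 ≤ j ∧ j < c := ⟨hj.1, lt_of_le_of_lt hj.2 hi⟩
              have hj'c : 1 ≤ j' ∧ j' < c := ⟨hj'.1, lt_of_le_of_lt hj'.2 hi⟩
              have heq2 : (if hj : 1 ≤ j ∧ j < c then (hex j hj.1 hj.2).choose else 0)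
                  = (if hj' : 1 ≤ j' ∧ j' < c then (hex j' hj'.1 hj'.2).choose else 0) := heq
              rw [dif_pos hjc, dif_pos hj'c] at heq2
              obtain ⟨hs1, hsc, hrel⟩ := (hex j hjc.1 hjc.2).choose_spec
              obtain ⟨hs1', hsc', hrel'⟩ := (hex j' hj'c.1 hj'c.2).choose_spec
              rw [heq2] at hrel
              exact hinj j ((hex j' hj'c.1 hj'c.2).choose) j' hjc.1 hjc.2 hj'c.1 hj'c.2 hrel hrel'
          rw [Nat.card_Icc] at h9
          omega
        have hSsub : S ⊆ Finset.Ico (c - i + 1) c := by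
          intro s hs
          rw [hS, Finset.mem_filter, Finset.mem_Ico] at hs
          obtain ⟨⟨hs1, hsc⟩, j, hj1, hji, hrel⟩ := hs
          rw [Finset.mem_Ico]
          refine ⟨?_, hsc⟩
          by_contra hle
          push_neg at hle
          have hsle : s ≤ c - i := by omega
          have ha : j * p ≤ β :=
            le_trans (Nat.mul_le_mul_right p hji) (Nat.div_mul_le_self β p)
          have hbb : s * q ≤ γ := by
            have h1 : s * q ≤ (c - i) * q := Nat.mul_le_mul_right q hsle
            have h2 : (c - i) * q ≤ (γ / q) * q := Nat.mul_le_mul_right q hcon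
            have h3 : (γ / q) * q ≤ γ := Nat.div_mul_le_self γ q
            omega
          refine hgood (j*p) (s*q) ha hbb ?_ hrel
          intro hcon2
          have : 1 ≤ j * p := Nat.mul_pos hj1 hp0
          omega
        have hle2 := Finset.card_le_card hSsub
        rw [Nat.card_Ico] at hle2
        omega
    have hinjF : Set.InjOn F (goodFinset g₁ g₂) := by
      intro pr _ pr' _ heq
      obtain ⟨β, γ⟩ := pr
      obtain ⟨β', γ'⟩ := pr'
      have heq2 : ((β % p, γ % q), (β / p, γ / q))
          = ((β' % p, γ' % q), (β' / p, γ' / q)) := heq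
      simp only [Prod.mk.injEq] at heq2
      obtain ⟨⟨e1, e2⟩, e3, e4⟩ := heq2
      have d1 := Nat.div_add_mod β p
      have d2 := Nat.div_add_mod β' p
      have d3 := Nat.div_add_mod γ q
      have d4 := Nat.div_add_mod γ' q
      have hβ : β = β' := by rw [← d1, ← d2, e1, e3]
      have hγ : γ = γ' := by rw [← d3, ← d4, e2, e4]
      rw [hβ, hγ]
    calc (goodFinset g₁ g₂).card ≤ Big.card :=
          Finset.card_le_card_of_injOn F hmaps hinjF
      _ = (p*q) * ((Finset.range c).biUnion (fun i => {i} ×ˢ Finset.range (c - i))).card := by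
          rw [hBig, Finset.card_product, Finset.card_product, Finset.card_range,
            Finset.card_range]
      _ ≤ p * q * (∑ i ∈ Finset.range c, (c - i)) := by
          refine Nat.mul_le_mul_left _ ?_
          refine le_trans (Finset.card_biUnion_le) ?_
          refine Finset.sum_le_sum ?_
          intro i _
          rw [Finset.card_product, Finset.card_singleton, Finset.card_range, one_mul]
  -- conclusion
  have h2T := gauss_aux c
  have hfin : (goodFinset g₁ g₂).card * 2 ≤ N * (N + 1) := by
    calc (goodFinset g₁ g₂).card * 2 ≤ (p * q * (∑ i ∈ Finset.range c, (c - i))) * 2 :=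
          Nat.mul_le_mul_right 2 hmain
      _ = (p * q * c) * (c + 1) := by
          have e : (p * q * (∑ i ∈ Finset.range c, (c - i))) * 2
              = (p * q) * (2 * (∑ i ∈ Finset.range c, (c - i))) := by ring
          rw [e, h2T]; ring
      _ ≤ N * (N + 1) := Nat.mul_le_mul hpqcN (by omega)
  exact (Nat.le_div_iff_mul_le (by norm_num)).mpr hfin
/-- Let `R = k[x^d, x^e y^ℓ, x^f y^m, y^n]` and `H` the subgroup of `(ℤ/d) ⊕ (ℤ/n)`
generated by `(e,ℓ)` and `(f,m)`.  Then
`dim_k R/(x^d, y^n) ≤ |H|(|H|+1)/2 ≤ dn(dn+1)/2`. -/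
theorem stmt_14 (k : Type*) [Field k] (d n e f l m : ℕ) (hd : 0 < d) (hn : 0 < n)
    (hel : (e, l) ≠ (0, 0))
    (R : Subalgebra k (MvPolynomial (Fin 2) k))
    (hR : R = Algebra.adjoin k
      ({X 0 ^ d, X 0 ^ e * X 1 ^ l, X 0 ^ f * X 1 ^ m, X 1 ^ n} :
        Set (MvPolynomial (Fin 2) k)))
    (xd yn : R)
    (hxd : (xd : MvPolynomial (Fin 2) k) = X 0 ^ d)
    (hyn : (yn : MvPolynomial (Fin 2) k) = X 1 ^ n)
    (H : AddSubgroup (ZMod d × ZMod n))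
    (hH : H = AddSubgroup.closure {((e : ZMod d), (l : ZMod n)), ((f : ZMod d), (m : ZMod n))}) :
    Module.finrank k (R ⧸ (Ideal.span {xd, yn} : Ideal R))
      ≤ Nat.card H * (Nat.card H + 1) / 2 ∧
    Nat.card H * (Nat.card H + 1) / 2 ≤ d * n * (d * n + 1) / 2 := by
  classical
  haveI : NeZero d := ⟨hd.ne'⟩
  haveI : NeZero n := ⟨hn.ne'⟩
  set g₁ : ZMod d × ZMod n := ((e : ZMod d), (l : ZMod n)) with hg₁
  set g₂ : ZMod d × ZMod n := ((f : ZMod d), (m : ZMod n)) with hg₂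
  have hNle : Nat.card H ≤ d * n := by
    have h1 : Nat.card H ≤ Nat.card (ZMod d × ZMod n) :=
      Nat.card_le_card_of_injective H.subtype H.subtype_injective
    have h2 : Nat.card (ZMod d × ZMod n) = d * n := by
      simp [Nat.card_eq_fintype_card, ZMod.card]
    omega
  refine ⟨?_, Nat.div_le_div_right (Nat.mul_le_mul hNle (by omega))⟩
  -- set up elements of R
  have humem : (X 0 ^ e * X 1 ^ l : MvPolynomial (Fin 2) k) ∈ R := by
    rw [hR]; exact Algebra.subset_adjoin (by simp)
  have hvmem : (X 0 ^ f * X 1 ^ m : MvPolynomial (Fin 2) k) ∈ R := by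
    rw [hR]; exact Algebra.subset_adjoin (by simp)
  set u : R := ⟨X 0 ^ e * X 1 ^ l, humem⟩ with hu
  set v : R := ⟨X 0 ^ f * X 1 ^ m, hvmem⟩ with hv
  set I : Ideal R := Ideal.span {xd, yn} with hI
  set π := Ideal.Quotient.mkₐ k I with hπ
  have hxdI : xd ∈ I := Ideal.subset_span (by simp)
  have hynI : yn ∈ I := Ideal.subset_span (by simp)
  -- factorization
  have hfact : ∀ a b c' c'' : ℕ, a*e + b*f = d*c' → a*l + b*m = n*c'' →
      u^a * v^b = xd^c' * yn^c'' := by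
    intro a b c' c'' h1 h2
    apply Subtype.ext
    show ((u^a * v^b : R) : MvPolynomial (Fin 2) k) = ((xd^c' * yn^c'' : R) : _)
    simp only [MulMemClass.coe_mul, SubmonoidClass.coe_pow, hxd, hyn]
    show (X 0 ^ e * X 1 ^ l) ^ a * (X 0 ^ f * X 1 ^ m) ^ b
        = (X 0 ^ d : MvPolynomial (Fin 2) k) ^ c' * (X 1 ^ n) ^ c''
    rw [mul_pow, mul_pow, ← pow_mul, ← pow_mul, ← pow_mul, ← pow_mul,
      mul_mul_mul_comm, ← pow_add, ← pow_add, ← pow_mul, ← pow_mul]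
    congr 1
    · congr 1
      rw [mul_comm e a, mul_comm f b]; exact h1
    · congr 1
      rw [mul_comm l a, mul_comm m b]; exact h2
  -- R is generated by the four elements
  have hTop : (⊤ : Subalgebra k R) = Algebra.adjoin k ({xd, u, v, yn} : Set R) := by
    apply Subalgebra.map_injective (f := R.val) Subtype.coe_injective
    rw [Algebra.map_top, Subalgebra.range_val, AlgHom.map_adjoin]
    conv_lhs => rw [hR]
    congr 1
    simp only [Set.image_insert_eq, Set.image_singleton, Subalgebra.coe_val]
    rw [hxd, hyn]
  -- decomposition of monomials
  have hdecomp : ∀ w ∈ Submonoid.closure ({xd, u, v, yn} : Set R),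
      ∃ a b c' e', w = xd^a * u^b * v^c' * yn^e' := by
    intro w hw
    induction hw using Submonoid.closure_induction with
    | mem x hx =>
        simp only [Set.mem_insert_iff, Set.mem_singleton_iff] at hx
        rcases hx with rfl | rfl | rfl | rfl
        · exact ⟨1, 0, 0, 0, by simp⟩
        · exact ⟨0, 1, 0, 0, by simp⟩
        · exact ⟨0, 0, 1, 0, by simp⟩
        · exact ⟨0, 0, 0, 1, by simp⟩
    | one => exact ⟨0, 0, 0, 0, by simp⟩
    | mul x y hx hy ihx ihy =>
        obtain ⟨a, b, c', e', rfl⟩ := ihx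
        obtain ⟨a2, b2, c2, e2, rfl⟩ := ihy
        exact ⟨a + a2, b + b2, c' + c2, e' + e2, by
          rw [pow_add, pow_add, pow_add, pow_add]; ring⟩
  set gf := goodFinset g₁ g₂ with hgf
  set SP : Submodule k (R ⧸ I) :=
    Submodule.span k ((gf.image (fun pr => π (u ^ pr.1 * v ^ pr.2)) : Finset (R ⧸ I)) : Set (R ⧸ I))
    with hSP
  have hgoodmem : ∀ b c', goodPair g₁ g₂ b c' → (b, c') ∈ gf := by
    intro b c' hgood
    rw [hgf, goodFinset, Finset.mem_filter, Finset.mem_product, Finset.mem_range,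
      Finset.mem_range]
    refine ⟨⟨?_, ?_⟩, hgood⟩
    · by_contra hle
      push_neg at hle
      refine hgood (addOrderOf g₁) 0 hle (Nat.zero_le _) ?_ ?_
      · intro hcon; exact (addOrderOf_pos g₁).ne' hcon.1
      · rw [zero_nsmul, add_zero, addOrderOf_nsmul_eq_zero]
    · by_contra hle
      push_neg at hle
      refine hgood 0 (addOrderOf g₂) (Nat.zero_le _) hle ?_ ?_
      · intro hcon; exact (addOrderOf_pos g₂).ne' hcon.2
      · rw [zero_nsmul, zero_add, addOrderOf_nsmul_eq_zero]
  -- main reduction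
  have hred : ∀ s b c', b + c' ≤ s → π (u ^ b * v ^ c') ∈ SP := by
    intro s
    induction s with
    | zero =>
        intro b c' hs
        have hb : b = 0 := by omega
        have hc : c' = 0 := by omega
        subst hb; subst hc
        rw [hSP, Finset.coe_image]
        refine Submodule.subset_span ⟨(0, 0), hgoodmem 0 0 ?_, rfl⟩
        intro a b ha hb hab
        exfalso; omega
    | succ s ih =>
        intro b c' hs
        by_cases hg : goodPair g₁ g₂ b c'
        · rw [hSP, Finset.coe_image]
          exact Submodule.subset_span ⟨(b, c'), hgoodmem b c' hg, rfl⟩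
        · rw [goodPair] at hg
          push_neg at hg
          obtain ⟨a, b2, ha, hb2, hab, heq⟩ := hg
          rw [hg₁, hg₂] at heq
          simp only [Prod.smul_mk, Prod.mk_add_mk, Prod.mk_eq_zero] at heq
          obtain ⟨heq1, heq2⟩ := heq
          rw [nsmul_eq_mul, nsmul_eq_mul] at heq1 heq2
          have hd1 : ((a*e + b2*f : ℕ) : ZMod d) = 0 := by push_cast; exact heq1
          have hd2 : ((a*l + b2*m : ℕ) : ZMod n) = 0 := by push_cast; exact heq2
          obtain ⟨c1, hc1⟩ := (ZMod.natCast_eq_zero_iff _ _).mp hd1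
          obtain ⟨c2, hc2⟩ := (ZMod.natCast_eq_zero_iff _ _).mp hd2
          by_cases hzero : c1 = 0 ∧ c2 = 0
          · -- degenerate : v = 1 case
            obtain ⟨hz1, hz2⟩ := hzero
            rw [hz1, mul_zero] at hc1
            rw [hz2, mul_zero] at hc2
            obtain ⟨hae, hbf⟩ := Nat.add_eq_zero.mp hc1
            obtain ⟨hal, hbm⟩ := Nat.add_eq_zero.mp hc2
            have ha0 : a = 0 := by
              by_contra ha0
              have he0 : e = 0 := by
                rcases Nat.mul_eq_zero.mp hae with h | h
                · exact absurd h ha0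
                · exact h
              have hl0 : l = 0 := by
                rcases Nat.mul_eq_zero.mp hal with h | h
                · exact absurd h ha0
                · exact h
              exact hel (by rw [he0, hl0])
            have hb20 : b2 ≠ 0 := by
              intro h0; exact hab ha0 h0
            have hf0 : f = 0 := by
              rcases Nat.mul_eq_zero.mp hbf with h | h
              · exact absurd h hb20
              · exact h
            have hm0 : m = 0 := by
              rcases Nat.mul_eq_zero.mp hbm with h | h
              · exact absurd h hb20
              · exact h
            have hv1 : v = 1 := by
              apply Subtype.ext
              show (X 0 ^ f * X 1 ^ m : MvPolynomial (Fin 2) k) = ((1 : R) : _)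
              rw [hf0, hm0]
              simp
            have e2 : π (u ^ b * v ^ c') = π (u ^ b * v ^ (c' - b2)) := by
              rw [hv1]; simp
            rw [e2]
            exact ih b (c' - b2) (by omega)
          · -- the monomial is in the ideal
            have hfa := hfact a b2 c1 c2 hc1 hc2
            have hsplit : u ^ b * v ^ c' = (u^a * v^b2) * (u^(b-a) * v^(c'-b2)) := by
              rw [mul_mul_mul_comm, ← pow_add, ← pow_add,
                Nat.add_sub_cancel' ha, Nat.add_sub_cancel' hb2]
            have hmem : u ^ b * v ^ c' ∈ I := by
              rw [hsplit, hfa]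
              rcases Nat.eq_zero_or_pos c1 with h0 | hpos
              · have hc2pos : 1 ≤ c2 := by
                  rcases Nat.eq_zero_or_pos c2 with h0' | h
                  · exact absurd ⟨h0, h0'⟩ hzero
                  · exact h
                have hyI : yn ^ c2 ∈ I := by
                  obtain ⟨c2', rfl⟩ : ∃ t, c2 = t + 1 := ⟨c2 - 1, by omega⟩
                  rw [pow_succ]
                  exact Ideal.mul_mem_left _ _ hynI
                exact Ideal.mul_mem_right _ _ (Ideal.mul_mem_left _ _ hyI)
              · have hxI : xd ^ c1 ∈ I := by
                  obtain ⟨c1', rfl⟩ : ∃ t, c1 = t + 1 := ⟨c1 - 1, by omega⟩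
                  rw [pow_succ]
                  exact Ideal.mul_mem_left _ _ hxdI
                exact Ideal.mul_mem_right _ _ (Ideal.mul_mem_right _ _ hxI)
            have hzero2 : π (u ^ b * v ^ c') = 0 := by
              rw [hπ, Ideal.Quotient.mkₐ_eq_mk]
              exact Ideal.Quotient.eq_zero_iff_mem.mpr hmem
            rw [hzero2]
            exact Submodule.zero_mem _
  -- spanning
  have hspan : SP = ⊤ := by
    rw [Submodule.eq_top_iff']
    intro z
    obtain ⟨r, rfl⟩ := Ideal.Quotient.mk_surjective z
    have hr : r ∈ Submodule.span k
        ((Submonoid.closure ({xd, u, v, yn} : Set R) : Submonoid R) : Set R) := by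
      have h1 : r ∈ (⊤ : Subalgebra k R) := trivial
      rw [hTop] at h1
      rw [← Algebra.adjoin_eq_span]
      exact h1
    have hπmk : ∀ x : R, Ideal.Quotient.mk I x = π x := by
      intro x; rw [hπ, Ideal.Quotient.mkₐ_eq_mk]
    rw [hπmk]
    refine Submodule.span_induction ?_ ?_ ?_ ?_ hr
    · intro x hx
      obtain ⟨a, b, c', e', rfl⟩ := hdecomp x hx
      rcases Nat.eq_zero_or_pos a with ha0 | hapos
      · rcases Nat.eq_zero_or_pos e' with he0 | hepos
        · have : π (xd ^ a * u ^ b * v ^ c' * yn ^ e') = π (u ^ b * v ^ c') := by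
            rw [ha0, he0]; simp
          rw [this]
          exact hred (b + c') b c' le_rfl
        · have hmem : xd ^ a * u ^ b * v ^ c' * yn ^ e' ∈ I := by
            have hyI : yn ^ e' ∈ I := by
              obtain ⟨t, rfl⟩ : ∃ t, e' = t + 1 := ⟨e' - 1, by omega⟩
              rw [pow_succ]
              exact Ideal.mul_mem_left _ _ hynI
            exact Ideal.mul_mem_left _ _ hyI
          rw [hπ, Ideal.Quotient.mkₐ_eq_mk, Ideal.Quotient.eq_zero_iff_mem.mpr hmem]
          exact Submodule.zero_mem _
      · have hmem : xd ^ a * u ^ b * v ^ c' * yn ^ e' ∈ I := by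
          have hxI : xd ^ a ∈ I := by
            obtain ⟨t, rfl⟩ : ∃ t, a = t + 1 := ⟨a - 1, by omega⟩
            rw [pow_succ]
            exact Ideal.mul_mem_left _ _ hxdI
          exact Ideal.mul_mem_right _ _ (Ideal.mul_mem_right _ _ (Ideal.mul_mem_right _ _ hxI))
        rw [hπ, Ideal.Quotient.mkₐ_eq_mk, Ideal.Quotient.eq_zero_iff_mem.mpr hmem]
        exact Submodule.zero_mem _
    · rw [map_zero]; exact Submodule.zero_mem _
    · intro x y hx hy ihx ihy
      rw [map_add]; exact Submodule.add_mem _ ihx ihy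
    · intro t x hx ihx
      rw [map_smul]; exact Submodule.smul_mem _ _ ihx
  -- conclusion
  have hfr : Module.finrank k (R ⧸ I) ≤
      (gf.image (fun pr => π (u ^ pr.1 * v ^ pr.2))).card := by
    have h2 := finrank_span_finset_le_card (R := k)
      (gf.image (fun pr => π (u ^ pr.1 * v ^ pr.2)))
    rw [Set.finrank, ← hSP, hspan, finrank_top] at h2
    exact h2
  refine le_trans hfr (le_trans Finset.card_image_le ?_)
  rw [hH]
  exact goodFinset_card_le g₁ g₂
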